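/- arXiv:2209.03003 — 3 statements merged into one kernel-verified Lean document; each statement's English description precedes it below -/
import Mathlib

section
/- Let Z^k denote the k-th rectified flow of (X₀,X₁), i.e., Z^{k+1} = RectifyFlow((Z₀^k, Z₁^k)) with (Z₀⁰, Z₁⁰) = (X₀, X₁), each coupling rectifiable. Then min_{0 ≤ k ≤ K} S(Z^k) ≤ E[‖X₁ − X₀‖²] / K, where S(Z) = ∫₀¹ E[‖(Z₁−Z₀) − Ż_t‖²]dt. -/
open MeasureTheory Set intervalIntegral

/-- O(1/K) convergence of the straightness measure under recursive rectification
(Theorem 3.7): if `Z k` is the `k`-th rectified flow of `(X₀, X₁)` (with `Z 0`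
the linear interpolation of the initial coupling) and each rectification step
satisfies the energy identity with a nonnegative crossing variance `V k`, then
`min_{0 ≤ k ≤ K} S(Z^k) ≤ E[‖X₁ - X₀‖²] / K`. -/
theorem stmt5 {d : ℕ} {Ω : Type*} [MeasurableSpace Ω] {P : Measure Ω}
    [IsProbabilityMeasure P]
    (X₀ X₁ : Ω → EuclideanSpace ℝ (Fin d))
    (hX : Integrable (fun ω => ‖X₁ ω - X₀ ω‖ ^ 2) P)
    (Z dZ : ℕ → Ω → ℝ → EuclideanSpace ℝ (Fin d))
    -- `Z 0` is the linear interpolation process of the data coupling `(X₀, X₁)`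
    (hZ0 : ∀ ω t, Z 0 ω t = t • X₁ ω + (1 - t) • X₀ ω)
    (hderiv : ∀ k ω, ∀ t ∈ Icc (0:ℝ) 1,
      HasDerivWithinAt (Z k ω) (dZ k ω t) (Icc (0:ℝ) 1) t)
    -- straightness measure of the `k`-th rectified flow
    (S : ℕ → ℝ)
    (hS : ∀ k, S k = ∫ t in (0:ℝ)..1, ∫ ω, ‖(Z k ω 1 - Z k ω 0) - dZ k ω t‖ ^ 2 ∂P)
    -- each rectification step satisfies the energy identity with `V k ≥ 0`
    (V : ℕ → ℝ) (hV : ∀ k, 0 ≤ V k)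
    (hid : ∀ k, (∫ ω, ‖Z k ω 1 - Z k ω 0‖ ^ 2 ∂P)
        - (∫ ω, ‖Z (k + 1) ω 1 - Z (k + 1) ω 0‖ ^ 2 ∂P) = S (k + 1) + V k)
    (hSnonneg : ∀ k, 0 ≤ S k)
    (hcost_nonneg : ∀ k, 0 ≤ ∫ ω, ‖Z k ω 1 - Z k ω 0‖ ^ 2 ∂P)
    (K : ℕ) (hK : 0 < K) :
    ∃ k ≤ K, S k ≤ (∫ ω, ‖X₁ ω - X₀ ω‖ ^ 2 ∂P) / K := by
  set E : ℕ → ℝ := fun k => ∫ ω, ‖Z k ω 1 - Z k ω 0‖ ^ 2 ∂P with hE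
  have hE0 : E 0 = ∫ ω, ‖X₁ ω - X₀ ω‖ ^ 2 ∂P := by
    simp only [hE]
    congr 1
    ext ω
    rw [hZ0 ω 1, hZ0 ω 0]
    norm_num
  have htel : ∑ k ∈ Finset.range K, (E k - E (k + 1)) = E 0 - E K :=
    Finset.sum_range_sub' E K
  have hsum : ∑ k ∈ Finset.range K, S (k + 1) ≤ E 0 := by
    calc ∑ k ∈ Finset.range K, S (k + 1)
        ≤ ∑ k ∈ Finset.range K, (S (k + 1) + V k) :=
          Finset.sum_le_sum (fun k _ => by linarith [hV k])
      _ = ∑ k ∈ Finset.range K, (E k - E (k + 1)) :=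
          Finset.sum_congr rfl (fun k _ => (hid k).symm)
      _ = E 0 - E K := htel
      _ ≤ E 0 := by linarith [hcost_nonneg K]
  obtain ⟨m, hm, hmin⟩ := Finset.exists_min_image (Finset.range K)
    (fun k => S (k + 1)) ⟨0, Finset.mem_range.mpr hK⟩
  have hm' := Finset.mem_range.mp hm
  refine ⟨m + 1, by omega, ?_⟩
  rw [← hE0, le_div_iff₀ (by positivity)]
  calc S (m + 1) * K = ∑ _k ∈ Finset.range K, S (m + 1) := by
        simp [Finset.sum_const, mul_comm]
    _ ≤ ∑ k ∈ Finset.range K, S (k + 1) :=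
        Finset.sum_le_sum (fun k hk => hmin k hk)
    _ ≤ E 0 := hsum
end

section
/- A coupling (X₀, X₁) on ℝ that is deterministic and monotonic is straight: the linear interpolation paths X_t = tX₁ + (1−t)X₀ do not intersect, i.e., X₁ − X₀ = E[X₁ − X₀ | X_t] almost surely for every t ∈ [0,1). -/
open MeasureTheory Set

/-- A deterministic monotone coupling `(X₀, X₁ = T ∘ X₀)` on `ℝ` is straight: for
every `t ∈ [0,1)`, `X₁ - X₀ = E[X₁ - X₀ | X_t]` almost surely, where
`X_t = t X₁ + (1-t) X₀`. -/
theorem stmt9 {Ω : Type*} [MeasurableSpace Ω] {P : Measure Ω}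
    [IsProbabilityMeasure P]
    (X₀ X₁ : Ω → ℝ) (hX₀m : Measurable X₀)
    (hX₀ : Integrable X₀ P) (hX₁ : Integrable X₁ P)
    (T : ℝ → ℝ) (hT : Monotone T) (hX₁T : ∀ ω, X₁ ω = T (X₀ ω)) :
    ∀ t ∈ Ico (0:ℝ) 1,
      (fun ω => X₁ ω - X₀ ω)
        =ᵐ[P] P[(fun ω => X₁ ω - X₀ ω) |
          MeasurableSpace.comap (fun ω => t * X₁ ω + (1 - t) * X₀ ω) (borel ℝ)] := by
  rename_i mΩ _
  intro t ht
  obtain ⟨ht0, ht1⟩ := ht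
  set f : ℝ → ℝ := fun x => t * T x + (1 - t) * x with hf
  have hTm : Measurable T := hT.measurable
  have hfm : Measurable f := (hTm.const_mul t).add (measurable_id.const_mul (1 - t))
  have hfsm : StrictMono f := by
    intro x y hxy
    have h1 : t * T x ≤ t * T y := mul_le_mul_of_nonneg_left (hT hxy.le) ht0
    have h2 : (1 - t) * x < (1 - t) * y :=
      mul_lt_mul_of_pos_left hxy (by linarith)
    simpa [hf] using add_lt_add_of_le_of_lt h1 h2
  have hemb : MeasurableEmbedding f := hfm.measurableEmbedding hfsm.injective
  have hborel : (borel ℝ : MeasurableSpace ℝ) = Real.measurableSpace :=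
    BorelSpace.measurable_eq.symm
  -- comap f borel = borel
  have hcomapf : MeasurableSpace.comap f (borel ℝ) = borel ℝ := by
    apply le_antisymm
    · rw [MeasurableSpace.comap_le_iff_le_map, hborel]
      exact fun s hs => hfm hs
    · intro s hs
      rw [hborel] at hs ⊢
      exact ⟨f '' s, hemb.measurableSet_image' hs,
        by rw [Function.Injective.preimage_image hemb.injective]⟩
  have hXt : (fun ω => t * X₁ ω + (1 - t) * X₀ ω) = f ∘ X₀ := by
    funext ω; simp [hf, hX₁T ω]
  set m : MeasurableSpace Ω :=
    MeasurableSpace.comap (fun ω => t * X₁ ω + (1 - t) * X₀ ω) (borel ℝ) with hm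
  have hmcomap : m = MeasurableSpace.comap X₀ (borel ℝ) := by
    rw [hm, hXt, ← MeasurableSpace.comap_comp, hcomapf]
  have hmle : m ≤ mΩ := by
    rw [hmcomap]
    rintro s ⟨u, hu, rfl⟩
    exact hX₀m (hborel ▸ hu)
  have hX0m' : Measurable[m] X₀ := by
    rw [hmcomap]
    exact measurable_iff_comap_le.2 (le_of_eq (congrArg _ hborel.symm))
  have hmeas : Measurable[m] (fun ω => X₁ ω - X₀ ω) := by
    have : (fun ω => X₁ ω - X₀ ω) = (fun x => T x - x) ∘ X₀ := by
      funext ω; simp [hX₁T ω]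
    rw [this]
    exact (hTm.sub measurable_id).comp hX0m'
  have hint : Integrable (fun ω => X₁ ω - X₀ ω) P := hX₁.sub hX₀
  exact (condExp_of_stronglyMeasurable hmle hmeas.stronglyMeasurable hint).symm ▸
    Filter.EventuallyEq.rfl
end

section
/- Let c : ℝ^d → ℝ be strictly convex and let Y be an integrable random vector with σ-algebra 𝒢. If E[c(Y)] = E[c(E[Y|𝒢])], then Y = E[Y|𝒢] almost surely. -/
open MeasureTheory Set

/-- Supporting hyperplane for a continuous convex function on the whole space. -/
theorem exists_support_clm {E : Type*} [NormedAddCommGroup E] [NormedSpace ℝ E]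
    {c : E → ℝ} (hc : ConvexOn ℝ Set.univ c) (hcont : Continuous c) (q : E) :
    ∃ L : E →L[ℝ] ℝ, ∀ x, c q + L (x - q) ≤ c x := by
  set S : Set (E × ℝ) := {p | c p.1 < p.2} with hS
  have hSopen : IsOpen S := isOpen_lt (hcont.comp continuous_fst) continuous_snd
  have hSconv : Convex ℝ S := by
    rintro ⟨x, s⟩ hx ⟨y, t⟩ hy a b ha hb hab
    simp only [hS, Set.mem_setOf_eq] at hx hy ⊢
    have h1 : c (a • x + b • y) ≤ a * c x + b * c y :=
      hc.2 (Set.mem_univ x) (Set.mem_univ y) ha hb hab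
    have h2 : a * c x + b * c y < a * s + b * t := by
      rcases ha.lt_or_eq with ha' | ha'
      · have : a * c x < a * s := by exact mul_lt_mul_of_pos_left hx ha'
        have : b * c y ≤ b * t := mul_le_mul_of_nonneg_left hy.le hb
        nlinarith [mul_lt_mul_of_pos_left hx ha']
      · have hb1 : b = 1 := by linarith
        simp [← ha', hb1] at *
        linarith
    exact h1.trans_lt h2
  have hmem : (q, c q) ∉ S := by simp [hS]
  obtain ⟨f, hf⟩ := geometric_hahn_banach_open_point hSconv hSopen hmem
  set g : E →L[ℝ] ℝ := f.comp (ContinuousLinearMap.inl ℝ E ℝ) with hg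
  set r : ℝ := f (0, 1) with hr
  have key : ∀ (x : E) (t : ℝ), f (x, t) = g x + t * r := by
    intro x t
    have hxt : (x, t) = (x, 0) + t • ((0 : E), (1 : ℝ)) := by
      simp [Prod.ext_iff]
    rw [hxt, map_add, f.map_smul]
    simp [hg, hr, ContinuousLinearMap.inl_apply, smul_eq_mul]
  have hrneg : r < 0 := by
    have h1 : f (q, c q + 1) < f (q, c q) := hf (q, c q + 1) (by simp [hS])
    rw [key, key] at h1
    nlinarith
  have hmain : ∀ x, g x + c x * r ≤ g q + c q * r := by
    intro x
    by_contra hlt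
    push_neg at hlt
    set A : ℝ := g x + c x * r - (g q + c q * r) with hA
    have hA0 : 0 < A := by linarith
    set ε : ℝ := A / (-r) with hε
    have hε0 : 0 < ε := div_pos hA0 (by linarith)
    have h1 : f (x, c x + ε) < f (q, c q) := hf (x, c x + ε) (by simp [hS]; linarith)
    rw [key, key] at h1
    have hrne : -r ≠ 0 := ne_of_gt (by linarith : (0:ℝ) < -r)
    have h2 : ε * r = -A := by
      rw [hε]
      field_simp
      rw [div_self (neg_ne_zero.mp hrne)]
    nlinarith
  refine ⟨(-r)⁻¹ • g, fun x => ?_⟩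
  have hrpos : 0 < -r := by linarith
  have h1 := hmain x
  have h2 : g x - g q ≤ (c x - c q) * (-r) := by nlinarith
  have h3 : (-r)⁻¹ * (g x - g q) ≤ (-r)⁻¹ * ((c x - c q) * (-r)) :=
    mul_le_mul_of_nonneg_left h2 (inv_nonneg.2 hrpos.le)
  have hrne : r ≠ 0 := by intro h; rw [h] at hrpos; simp at hrpos
  have h4 : (-r)⁻¹ * ((c x - c q) * (-r)) = c x - c q := by
    field_simp
  rw [ContinuousLinearMap.smul_apply, map_sub, smul_eq_mul]
  rw [h4] at h3
  linarith

/-- Recovering the value of a convex function from supporting hyperplanes at a dense set. -/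
theorem le_of_forall_support_le {E : Type*} [NormedAddCommGroup E] [NormedSpace ℝ E]
    [FiniteDimensional ℝ E]
    {c : E → ℝ} (hcont : Continuous c) (u : ℕ → E) (hu : DenseRange u)
    (L : ℕ → E →L[ℝ] ℝ) (hL : ∀ n x, c (u n) + L n (x - u n) ≤ c x)
    {z : E} {t : ℝ} (h : ∀ n, c (u n) + (L n) (z - u n) ≤ t) : c z ≤ t := by
  have hcomp : IsCompact (Metric.closedBall z 2) := isCompact_closedBall z 2
  obtain ⟨M, hM⟩ : ∃ M, ∀ y ∈ Metric.closedBall z 2, c y ≤ M := by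
    obtain ⟨M, hM⟩ := (hcomp.image hcont).bddAbove
    exact ⟨M, fun y hy => hM (Set.mem_image_of_mem c hy)⟩
  refine le_of_forall_pos_le_add fun ε hε => ?_
  set K : ℝ := max (M - c z + ε / 2) 1 with hK
  have hK1 : (1 : ℝ) ≤ K := le_max_right _ _
  have hK0 : 0 < K := lt_of_lt_of_le one_pos hK1
  obtain ⟨δ, hδ0, hδ⟩ : ∃ δ > 0, ∀ y : E, dist y z < δ → dist (c y) (c z) < ε / 2 :=
    Metric.continuousAt_iff.1 hcont.continuousAt (ε / 2) (half_pos hε)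
  set δ' : ℝ := min (min δ 1) (ε / (2 * K)) with hδ'
  have hδ'0 : 0 < δ' := lt_min (lt_min hδ0 one_pos) (by positivity)
  obtain ⟨n, hn⟩ := hu.exists_dist_lt z hδ'0
  rw [dist_comm] at hn
  have hn1 : dist (u n) z < δ := hn.trans_le ((min_le_left _ _).trans (min_le_left _ _))
  have hn2 : dist (u n) z ≤ 1 := hn.le.trans ((min_le_left _ _).trans (min_le_right _ _))
  have hn3 : dist (u n) z < ε / (2 * K) := hn.trans_le (min_le_right _ _)
  have hcu : |c (u n) - c z| < ε / 2 := by
    have := hδ (u n) hn1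
    rwa [Real.dist_eq] at this
  -- lower bound on L n (z - u n)
  set s : ℝ := ‖z - u n‖ with hs
  have hsd : s = dist (u n) z := by rw [hs, dist_eq_norm, norm_sub_rev]
  have hlow : -(s * K) ≤ L n (z - u n) := by
    rcases eq_or_lt_of_le (norm_nonneg (z - u n)) with h0 | h0
    · have : z - u n = 0 := by rw [← norm_eq_zero]; exact h0.symm ▸ rfl
      rw [this, map_zero]
      have : s = 0 := by rw [hs, this, norm_zero]
      rw [this]
      simp
    · set v : E := s⁻¹ • (u n - z) with hv
      have hs0 : s ≠ 0 := by positivity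
      have h0' : 0 < s := h0
      have hnz : ‖u n - z‖ = s := by rw [hs, norm_sub_rev]
      have hvnorm : ‖v‖ = 1 := by
        rw [hv, norm_smul, hnz, Real.norm_eq_abs, abs_inv, abs_of_pos h0', inv_mul_cancel₀ hs0]
      have hvm : u n + v ∈ Metric.closedBall z 2 := by
        rw [Metric.mem_closedBall, dist_eq_norm]
        calc ‖u n + v - z‖ ≤ ‖u n - z‖ + ‖v‖ := by
              rw [show u n + v - z = (u n - z) + v by abel]; exact norm_add_le _ _
        _ ≤ 1 + 1 := by
              rw [hvnorm]
              gcongr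
              rw [← dist_eq_norm]; exact hn2
        _ = 2 := by norm_num
      have hLv : L n v ≤ M - c (u n) := by
        have h1 := hL n (u n + v)
        have h2 : c (u n + v) ≤ M := hM _ hvm
        simp only [add_sub_cancel_left] at h1
        linarith
      have hMK : M - c (u n) ≤ K := by
        have h1 : c z - ε / 2 < c (u n) := by
          rcases abs_lt.1 hcu with ⟨h2, _⟩; linarith
        calc M - c (u n) ≤ M - c z + ε / 2 := by linarith
        _ ≤ K := le_max_left _ _
      have hzu : z - u n = (-s) • v := by
        have hss : (-s) * s⁻¹ = -1 := by field_simp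
        rw [hv, smul_smul, hss, neg_one_smul, neg_sub]
      rw [hzu, (L n).map_smul, smul_eq_mul]
      have : L n v ≤ K := hLv.trans hMK
      nlinarith
  have hsK : s * K ≤ ε / 2 := by
    have : s ≤ ε / (2 * K) := by rw [hsd]; exact hn3.le
    calc s * K ≤ (ε / (2 * K)) * K := by nlinarith
    _ = ε / 2 := by field_simp
  have hcz : c z - ε / 2 < c (u n) := by
    rcases abs_lt.1 hcu with ⟨h2, _⟩; linarith
  have := h n
  linarith

/-- Conditional expectation commutes with continuous linear functionals,
characterized via set integrals. -/
theorem condexp_clm_ae_eq {Ω : Type*} {m : MeasurableSpace Ω} [m0 : MeasurableSpace Ω]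
    {P : Measure Ω} [IsProbabilityMeasure P] (hm : m ≤ m0)
    {E : Type*} [NormedAddCommGroup E] [NormedSpace ℝ E] [CompleteSpace E]
    {W Z : Ω → E} (hW : Integrable W P) (hZ : Integrable Z P)
    (hZm : StronglyMeasurable[m] Z)
    (hWZ : ∀ s, MeasurableSet[m] s → ∫ ω in s, W ω ∂P = ∫ ω in s, Z ω ∂P)
    (L : E →L[ℝ] ℝ) :
    P[fun ω => L (W ω)|m] =ᵐ[P] fun ω => L (Z ω) := by
  haveI : SigmaFinite (P.trim hm) := by
    haveI := isFiniteMeasure_trim (μ := P) hm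
    infer_instance
  refine (ae_eq_condExp_of_forall_setIntegral_eq hm (L.integrable_comp hW) ?_ ?_ ?_).symm
  · exact fun s _ _ => (L.integrable_comp hZ).integrableOn
  · intro s hs _
    rw [L.integral_comp_comm hZ.integrableOn, L.integral_comp_comm hW.integrableOn, hWZ s hs]
  · exact (L.continuous.comp_stronglyMeasurable hZm).aestronglyMeasurable

/-- Equality in the conditional Jensen inequality for a strictly convex function
forces the random vector to equal its conditional expectation almost surely. -/
theorem stmt12 {d : ℕ} {Ω : Type*} [m0 : MeasurableSpace Ω] {P : Measure Ω}
    [IsProbabilityMeasure P]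
    (m : MeasurableSpace Ω) (hm : m ≤ m0)
    (Y : Ω → EuclideanSpace ℝ (Fin d)) (hY : Integrable Y P)
    (c : EuclideanSpace ℝ (Fin d) → ℝ) (hc : StrictConvexOn ℝ Set.univ c)
    (hint₁ : Integrable (fun ω => c (Y ω)) P)
    (hint₂ : Integrable (fun ω => c ((P[Y|m]) ω)) P)
    (heq : ∫ ω, c (Y ω) ∂P = ∫ ω, c ((P[Y|m]) ω) ∂P) :
    Y =ᵐ[P] P[Y|m] := by
  letI inst0 : MeasurableSpace Ω := m0
  have hinst : inst0 = m0 := rfl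
  haveI : SigmaFinite (P.trim hm) := by
    haveI := isFiniteMeasure_trim (μ := P) hm
    infer_instance
  set Z : Ω → EuclideanSpace ℝ (Fin d) := P[Y|m] with hZdef
  have hZint : Integrable Z P := integrable_condExp
  have hZm : StronglyMeasurable[m] Z := stronglyMeasurable_condExp
  have hcont : Continuous c := by
    rw [← continuousOn_univ]
    exact hc.convexOn.continuousOn isOpen_univ
  set W : Ω → EuclideanSpace ℝ (Fin d) := fun ω => (2⁻¹ : ℝ) • (Y ω + Z ω) with hWdef
  have hWint : Integrable W P := by
    exact (hY.add hZint).smul ((2:ℝ)⁻¹)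
  have hWZ : ∀ s, MeasurableSet[m] s → ∫ ω in s, W ω ∂P = ∫ ω in s, Z ω ∂P := by
    intro s hs
    have h1 : ∫ ω in s, Z ω ∂P = ∫ ω in s, Y ω ∂P := setIntegral_condExp hm hY hs
    calc ∫ ω in s, W ω ∂P = (2⁻¹ : ℝ) • ∫ ω in s, (Y ω + Z ω) ∂P := by
          simp only [hWdef]
          rw [integral_smul]
    _ = (2⁻¹ : ℝ) • ((∫ ω in s, Y ω ∂P) + ∫ ω in s, Z ω ∂P) := by
          rw [integral_add hY.integrableOn hZint.integrableOn]
    _ = ∫ ω in s, Z ω ∂P := by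
          rw [h1, ← two_smul ℝ, smul_smul]
          norm_num
  -- pointwise convexity bounds
  have hWrw : ∀ ω, W ω = (2⁻¹ : ℝ) • Y ω + (2⁻¹ : ℝ) • Z ω := fun ω => by
    simp only [hWdef]
    rw [smul_add]
  have hupper : ∀ ω, c (W ω) ≤ (c (Y ω) + c (Z ω)) / 2 := by
    intro ω
    have := hc.convexOn.2 (Set.mem_univ (Y ω)) (Set.mem_univ (Z ω))
      (by norm_num : (0:ℝ) ≤ 2⁻¹) (by norm_num : (0:ℝ) ≤ 2⁻¹) (by norm_num)
    rw [← hWrw ω] at this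
    simp only [smul_eq_mul] at this
    linarith
  obtain ⟨L0, hL0⟩ := exists_support_clm hc.convexOn hcont 0
  have hcW_meas : AEStronglyMeasurable (fun ω => c (W ω)) P :=
    hcont.comp_aestronglyMeasurable hWint.1
  have hcW_int : Integrable (fun ω => c (W ω)) P := by
    refine Integrable.mono'
      (g := fun ω => |c 0 + L0 (W ω)| + |(c (Y ω) + c (Z ω)) / 2|) ?_ hcW_meas ?_
    · refine Integrable.add ?_ ?_
      · exact ((integrable_const (c 0)).add (L0.integrable_comp hWint)).abs
      · exact ((hint₁.add hint₂).div_const 2).abs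
    · filter_upwards with ω
      rw [Real.norm_eq_abs, abs_le]
      have hlo := hL0 (W ω)
      rw [sub_zero] at hlo
      have hup := hupper ω
      constructor
      · have h1 : -(|c 0 + L0 (W ω)|) ≤ c 0 + L0 (W ω) := neg_abs_le _
        have h2 : (0:ℝ) ≤ |(c (Y ω) + c (Z ω)) / 2| := abs_nonneg _
        linarith
      · have h1 : (c (Y ω) + c (Z ω)) / 2 ≤ |(c (Y ω) + c (Z ω)) / 2| := le_abs_self _
        have h2 : (0:ℝ) ≤ |c 0 + L0 (W ω)| := abs_nonneg _
        linarith
  -- dense sequence and supporting hyperplanes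
  obtain ⟨u, hu⟩ := TopologicalSpace.exists_dense_seq (EuclideanSpace ℝ (Fin d))
  choose L hL using fun n => exists_support_clm hc.convexOn hcont (u n)
  -- conditional Jensen via supporting hyperplanes
  have hcombo : ∀ n, ∀ᵐ ω ∂P,
      c (u n) + L n (Z ω - u n) ≤ (P[fun ω => c (W ω)|m]) ω := by
    intro n
    have haff_int : Integrable (fun ω => c (u n) + L n (W ω - u n)) P := by
      simp_rw [map_sub]
      exact (integrable_const (c (u n))).add
        (((L n).integrable_comp hWint).sub (integrable_const (L n (u n))))
    have hmono := condExp_mono (μ := P) (m := m) haff_int hcW_int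
      (Filter.Eventually.of_forall fun ω => hL n (W ω))
    have hA := condexp_clm_ae_eq hm hWint hZint hZm hWZ (L n)
    have hkey : (fun ω => c (u n) + L n (W ω - u n))
        = (fun _ : Ω => c (u n) - L n (u n)) + fun ω => L n (W ω) := by
      funext ω
      simp only [Pi.add_apply, map_sub]
      ring
    have hcalc : P[fun ω => c (u n) + L n (W ω - u n)|m]
        =ᵐ[P] fun ω => c (u n) + L n (Z ω - u n) := by
      rw [hkey]
      refine (condExp_add (integrable_const _) ((L n).integrable_comp hWint) m).trans ?_
      rw [condExp_const hm]
      filter_upwards [hA] with ω hω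
      simp only [Pi.add_apply, hω, map_sub]
      ring
    filter_upwards [hmono, hcalc] with ω h1 h2
    rw [← h2]
    exact h1
  have hall : ∀ᵐ ω ∂P, ∀ n,
      c (u n) + L n (Z ω - u n) ≤ (P[fun ω => c (W ω)|m]) ω := ae_all_iff.2 hcombo
  have hZle : ∀ᵐ ω ∂P, c (Z ω) ≤ (P[fun ω => c (W ω)|m]) ω := by
    filter_upwards [hall] with ω hω
    exact le_of_forall_support_le hcont u hu L hL hω
  have h9 : ∫ ω, c (Z ω) ∂P ≤ ∫ ω, c (W ω) ∂P := by
    have := integral_mono_ae hint₂ integrable_condExp hZle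
    rwa [integral_condExp hm] at this
  -- the defect function
  set g : Ω → ℝ := fun ω => (c (Y ω) + c (Z ω)) / 2 - c (W ω) with hgdef
  have hg_nonneg : ∀ ω, 0 ≤ g ω := fun ω => by
    have := hupper ω
    simp only [hgdef]
    linarith
  have hg_int : Integrable g P := ((hint₁.add hint₂).div_const 2).sub hcW_int
  have hg_integral : ∫ ω, g ω ∂P = 0 := by
    have h1 : ∫ ω, g ω ∂P
        = (∫ ω, c (Y ω) ∂P + ∫ ω, c (Z ω) ∂P) / 2 - ∫ ω, c (W ω) ∂P := by
      simp only [hgdef]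
      have e1 : Integrable (fun ω => (c (Y ω) + c (Z ω)) / 2) P := by
        have h := (hint₁.add hint₂).div_const 2
        simpa using h
      rw [integral_sub e1 hcW_int]
      congr 1
      rw [integral_div, integral_add hint₁ hint₂]
    have h2 : 0 ≤ ∫ ω, g ω ∂P := integral_nonneg hg_nonneg
    have h3 : ∫ ω, g ω ∂P ≤ 0 := by rw [h1]; rw [heq] at *; linarith [h9]
    linarith
  have hg_zero : g =ᵐ[P] 0 :=
    (integral_eq_zero_iff_of_nonneg_ae (Filter.Eventually.of_forall hg_nonneg) hg_int).1
      hg_integral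
  filter_upwards [hg_zero] with ω hω
  by_contra hne
  have hstrict := hc.2 (Set.mem_univ (Y ω)) (Set.mem_univ (Z ω)) hne
    (by norm_num : (0:ℝ) < 2⁻¹) (by norm_num : (0:ℝ) < 2⁻¹) (by norm_num)
  rw [← hWrw ω] at hstrict
  have hω' : (c (Y ω) + c (Z ω)) / 2 - c (W ω) = 0 := hω
  simp only [smul_eq_mul] at hstrict
  linarith
end
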